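/- Let M be a matrix algebra with delta-form δ and GNS space L²(M). For x_{i,j} ∈ M ⊗ M nonzero elements (indexed by i,j in a finite index set) satisfying the cocycle-type relation (X_{i,j} ⊗ 1)(1 ⊗ σ^{1/2} ⊗ 1)(1 ⊗ X_{j,k})(1 ⊗ σ^{-1/2} ⊗ 1) = (X_{i,k})_{13} for all i,j,k, where (a ⊗ b)_{13} = a ⊗ 1 ⊗ b: there exists an invertible α (a family α_i of invertible elements) such that X_{i,j} = α_i ⊗ σ^{1/2} α_j^{-1} σ^{-1/2}. -/

import Mathlib

open scoped ComplexOrder TensorProduct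

set_option synthInstance.maxHeartbeats 1000000
set_option maxHeartbeats 1000000

namespace Stmt12Aux

variable {V W : Type*} [AddCommGroup V] [Module ℂ V] [AddCommGroup W] [Module ℂ W]

/-- left slice: apply a functional to the first leg. -/
noncomputable def ls (φ : Module.Dual ℂ V) : V ⊗[ℂ] W →ₗ[ℂ] W :=
  (TensorProduct.lid ℂ W).toLinearMap ∘ₗ TensorProduct.map φ LinearMap.id

/-- right slice: apply a functional to the second leg. -/
noncomputable def rs (ψ : Module.Dual ℂ W) : V ⊗[ℂ] W →ₗ[ℂ] V :=
  (TensorProduct.rid ℂ V).toLinearMap ∘ₗ TensorProduct.map LinearMap.id ψ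

@[simp] lemma ls_tmul (φ : Module.Dual ℂ V) (a : V) (b : W) :
    ls φ (a ⊗ₜ[ℂ] b) = φ a • b := by
  simp [ls]

@[simp] lemma rs_tmul (ψ : Module.Dual ℂ W) (a : V) (b : W) :
    rs ψ (a ⊗ₜ[ℂ] b) = ψ b • a := by
  simp [rs]

lemma exists_dual_ne_zero {a : V} (ha : a ≠ 0) : ∃ φ : Module.Dual ℂ V, φ a ≠ 0 := by
  by_contra h
  push_neg at h
  exact ha ((Module.forall_dual_apply_eq_zero_iff ℂ a).mp h)

lemma exists_dual_eq_one {a : V} (ha : a ≠ 0) : ∃ φ : Module.Dual ℂ V, φ a = 1 := by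
  obtain ⟨φ, hφ⟩ := exists_dual_ne_zero ha
  exact ⟨(φ a)⁻¹ • φ, by simp [inv_mul_cancel₀ hφ]⟩

lemma coord_slice [Module.Free ℂ V] [Module.Free ℂ W]
    (bV : Module.Basis (Module.Free.ChooseBasisIndex ℂ V) ℂ V)
    (bW : Module.Basis (Module.Free.ChooseBasisIndex ℂ W) ℂ W)
    (t : V ⊗[ℂ] W) (m : Module.Free.ChooseBasisIndex ℂ V)
    (n : Module.Free.ChooseBasisIndex ℂ W) :
    bW.coord n (ls (bV.coord m) t) = (bV.tensorProduct bW).repr t (m, n) := by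
  induction t using TensorProduct.induction_on with
  | zero => simp
  | tmul a b => simp [Module.Basis.coord_apply, smul_eq_mul, mul_comm]
  | add x y hx hy => simp [map_add, hx, hy]

lemma exists_slice_ne_zero [Module.Free ℂ V] [Module.Free ℂ W]
    {t : V ⊗[ℂ] W} (ht : t ≠ 0) :
    ∃ (φ : Module.Dual ℂ V) (ψ : Module.Dual ℂ W), ψ (ls φ t) ≠ 0 := by
  classical
  set bV := Module.Free.chooseBasis ℂ V
  set bW := Module.Free.chooseBasis ℂ W
  have h : (bV.tensorProduct bW).repr t ≠ 0 := by
    simpa using (bV.tensorProduct bW).repr.map_ne_zero_iff.mpr ht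
  obtain ⟨⟨m, n⟩, hmn⟩ := Finsupp.ne_iff.mp h
  refine ⟨bV.coord m, bW.coord n, ?_⟩
  rw [coord_slice bV bW t m n]
  simpa using hmn

/-- tensor of nonzero vectors is nonzero -/
lemma tmul_ne_zero' [Module.Free ℂ V] [Module.Free ℂ W] {a : V} {b : W}
    (ha : a ≠ 0) (hb : b ≠ 0) : a ⊗ₜ[ℂ] b ≠ 0 := by
  obtain ⟨φ, hφ⟩ := exists_dual_eq_one ha
  obtain ⟨ψ, hψ⟩ := exists_dual_eq_one hb
  intro h
  have : ψ (ls φ (a ⊗ₜ[ℂ] b)) = 0 := by rw [h]; simp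
  rw [ls_tmul, hφ, one_smul, hψ] at this
  exact one_ne_zero this

/-- proportionality of equal elementary tensors -/
lemma tmul_eq_tmul_iff [Module.Free ℂ V] [Module.Free ℂ W] {a c : V} {b d : W}
    (ha : a ≠ 0) (hb : b ≠ 0) (h : a ⊗ₜ[ℂ] b = c ⊗ₜ[ℂ] d) :
    ∃ s : ℂ, s ≠ 0 ∧ c = s • a ∧ b = s • d := by
  obtain ⟨φ, hφ⟩ := exists_dual_eq_one ha
  have h1 : b = φ c • d := by
    have := congrArg (ls φ) h
    simpa [hφ] using this
  have hs : φ c ≠ 0 := by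
    intro h0; rw [h0, zero_smul] at h1; exact hb h1
  refine ⟨φ c, hs, ?_, h1⟩
  obtain ⟨ψ, hψ⟩ := exists_dual_ne_zero (a := d) (by
    intro h0; rw [h0, smul_zero] at h1; exact hb h1)
  have h2 := congrArg (rs ψ) h
  rw [rs_tmul, rs_tmul, h1] at h2
  -- h2 : ψ (φ c • d) • a = ψ d • c
  rw [map_smul, smul_eq_mul, mul_smul] at h2
  have := congrArg (fun z => (ψ d)⁻¹ • z) h2
  simp only [← smul_assoc, smul_eq_mul] at this
  rw [inv_mul_cancel₀ hψ, one_smul] at this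
  have hcoef : (ψ d)⁻¹ * (φ c * ψ d) = φ c := by
    field_simp
  rw [hcoef] at this
  exact this.symm


section Alg

variable {A B C : Type*} [Ring A] [Algebra ℂ A] [Ring B] [Algebra ℂ B] [Ring C] [Algebra ℂ C]

lemma slice_ls_mul (φ : Module.Dual ℂ A) (u : A ⊗[ℂ] B) (y : B ⊗[ℂ] C) :
    ls φ ((TensorProduct.map LinearMap.id ((TensorProduct.mk ℂ B C).flip 1) u)
        * ((1 : A) ⊗ₜ[ℂ] y))
      = ((ls φ u : B) ⊗ₜ[ℂ] (1 : C)) * y := by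
  induction u using TensorProduct.induction_on with
  | zero => simp
  | tmul a b =>
      induction y using TensorProduct.induction_on with
      | zero => simp
      | tmul b' c =>
          simp only [TensorProduct.map_tmul, LinearMap.id_coe, id_eq,
            TensorProduct.mk_apply, LinearMap.flip_apply,
            Algebra.TensorProduct.tmul_mul_tmul, one_mul, mul_one, ls_tmul,
            TensorProduct.smul_tmul']
          simp [TensorProduct.smul_tmul', smul_mul_assoc]
      | add x y hx hy =>
          simp only [mul_add, TensorProduct.tmul_add, map_add] at *
          rw [hx, hy]
  | add x y hx hy =>
      simp only [map_add, add_mul, TensorProduct.add_tmul] at *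
      rw [hx, hy]

lemma slice_ls_incl (φ : Module.Dual ℂ A) (w : A ⊗[ℂ] C) :
    ls φ (TensorProduct.map LinearMap.id (TensorProduct.mk ℂ B C 1) w)
      = (1 : B) ⊗ₜ[ℂ] (ls φ w : C) := by
  induction w using TensorProduct.induction_on with
  | zero => simp
  | tmul a c => simp [TensorProduct.tmul_smul]
  | add x y hx hy => simp only [map_add, TensorProduct.tmul_add] at *; rw [hx, hy]

lemma slice_rs_mul (ψ : Module.Dual ℂ C) (u : A ⊗[ℂ] B) (y : B ⊗[ℂ] C) :
    TensorProduct.map LinearMap.id (rs ψ)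
        ((TensorProduct.map LinearMap.id ((TensorProduct.mk ℂ B C).flip 1) u)
          * ((1 : A) ⊗ₜ[ℂ] y))
      = u * ((1 : A) ⊗ₜ[ℂ] (rs ψ y : B)) := by
  induction u using TensorProduct.induction_on with
  | zero => simp
  | tmul a b =>
      induction y using TensorProduct.induction_on with
      | zero => simp
      | tmul b' c =>
          simp only [TensorProduct.map_tmul, LinearMap.id_coe, id_eq,
            TensorProduct.mk_apply, LinearMap.flip_apply,
            Algebra.TensorProduct.tmul_mul_tmul, one_mul, mul_one, rs_tmul]
          simp [TensorProduct.tmul_smul, smul_comm, mul_smul_comm]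
      | add x y hx hy =>
          simp only [mul_add, TensorProduct.tmul_add, map_add] at *
          rw [hx, hy]
  | add x y hx hy =>
      simp only [map_add, add_mul, TensorProduct.add_tmul] at *
      rw [hx, hy]

lemma slice_rs_incl (ψ : Module.Dual ℂ C) (w : A ⊗[ℂ] C) :
    TensorProduct.map LinearMap.id (rs ψ)
        (TensorProduct.map LinearMap.id (TensorProduct.mk ℂ B C 1) w)
      = (rs ψ w : A) ⊗ₜ[ℂ] (1 : B) := by
  induction w using TensorProduct.induction_on with
  | zero => simp
  | tmul a c => simp [TensorProduct.smul_tmul']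
  | add x y hx hy => simp only [map_add, TensorProduct.add_tmul] at *; rw [hx, hy]

lemma rs_left_mul (ψ : Module.Dual ℂ C) (m : B) (y : B ⊗[ℂ] C) :
    rs ψ ((m ⊗ₜ[ℂ] (1 : C)) * y) = m * rs ψ y := by
  induction y using TensorProduct.induction_on with
  | zero => simp
  | tmul b c => simp [mul_smul_comm]
  | add x y hx hy => simp only [mul_add, map_add] at *; rw [hx, hy]

end Alg


abbrev Mat (n : ℕ) := Matrix (Fin n) (Fin n) ℂ

lemma mat_one_ne_zero {k : ℕ} (hk : 0 < k) : (1 : Mat k) ≠ 0 := by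
  intro h
  have := congrFun (congrFun h ⟨0, hk⟩) ⟨0, hk⟩
  simp [Matrix.one_apply] at this

lemma isUnit_left_of_mul_eq_smul_one {k : ℕ} {m n : Mat k} {c : ℂ}
    (hc : c ≠ 0) (h : m * n = c • 1) : IsUnit m := by
  have h1 : m * (c⁻¹ • n) = 1 := by
    rw [mul_smul_comm, h, smul_smul, inv_mul_cancel₀ hc, one_smul]
  exact ⟨⟨m, c⁻¹ • n, h1, mul_eq_one_comm.mp h1⟩, rfl⟩

lemma isUnit_right_of_mul_eq_smul_one {k : ℕ} {m n : Mat k} {c : ℂ}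
    (hc : c ≠ 0) (h : m * n = c • 1) : IsUnit n := by
  have h1 : m * (c⁻¹ • n) = 1 := by
    rw [mul_smul_comm, h, smul_smul, inv_mul_cancel₀ hc, one_smul]
  have h2 : (c⁻¹ • n) * m = 1 := mul_eq_one_comm.mp h1
  have h3 : n * m = c • 1 := by
    have := congrArg (fun z => c • z) h2
    simpa [smul_mul_assoc, smul_smul, mul_inv_cancel₀ hc] using this
  exact isUnit_left_of_mul_eq_smul_one hc h3

lemma isUnit_smul_mat {k : ℕ} {c : ℂ} {m : Mat k} (hc : c ≠ 0) (hm : IsUnit m) :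
    IsUnit (c • m) := by
  obtain ⟨u, rfl⟩ := hm
  have h1 : (c • (u : Mat k)) * (c⁻¹ • ((u⁻¹ : (Mat k)ˣ) : Mat k)) = 1 := by
    rw [mul_smul_comm, smul_mul_assoc, smul_smul, inv_mul_cancel₀ hc, one_smul]
    exact Units.mul_inv u
  exact ⟨⟨_, _, h1, mul_eq_one_comm.mp h1⟩, rfl⟩

lemma unit_ne_zero {k : ℕ} (hk : 0 < k) {m : Mat k} (h : IsUnit m) : m ≠ 0 := by
  rintro rfl
  obtain ⟨u, hu⟩ := h
  apply mat_one_ne_zero hk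
  calc (1 : Mat k) = ((u⁻¹ : (Mat k)ˣ) : Mat k) * ((u : Mat k)) := (Units.inv_mul u).symm
    _ = 0 := by rw [hu, mul_zero]

lemma isUnit_inv_mat {k : ℕ} {m : Mat k} (h : IsUnit m) : IsUnit m⁻¹ := by
  have hd := (Matrix.isUnit_iff_isUnit_det m).mp h
  exact ⟨⟨m⁻¹, m, Matrix.nonsing_inv_mul m hd, Matrix.mul_nonsing_inv m hd⟩, rfl⟩

lemma smul_cancel {V : Type*} [AddCommGroup V] [Module ℂ V] {s t : ℂ} {v : V}
    (hv : v ≠ 0) (h : s • v = t • v) : s = t :=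
  smul_left_injective ℂ hv h

lemma one_tmul_mul_one_tmul {A D : Type*} [Ring A] [Algebra ℂ A] [Ring D] [Algebra ℂ D]
    (x y : D) :
    ((1 : A) ⊗ₜ[ℂ] x) * ((1 : A) ⊗ₜ[ℂ] y) = (1 : A) ⊗ₜ[ℂ] (x * y) := by
  have := map_mul (Algebra.TensorProduct.includeRight (R := ℂ) (A := A) (B := D)) x y
  simpa [Algebra.TensorProduct.includeRight_apply] using this.symm

lemma conj_mul_conj {k : ℕ} {t P1 P2 : Mat k} (ht : IsUnit t.det) (h : P1 * P2 = 1) :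
    (t * P1 * t⁻¹) * (t * P2 * t⁻¹) = 1 := by
  calc (t * P1 * t⁻¹) * (t * P2 * t⁻¹)
      = t * P1 * ((t⁻¹ * t) * (P2 * t⁻¹)) := by simp only [mul_assoc]
    _ = t * (P1 * P2) * t⁻¹ := by
        rw [Matrix.nonsing_inv_mul _ ht, one_mul]; simp only [mul_assoc]
    _ = t * t⁻¹ := by rw [h, mul_one]
    _ = 1 := Matrix.mul_nonsing_inv _ ht

lemma conj_smul {k : ℕ} (t : Mat k) (e : ℂ) (Z : Mat k) :
    t * (e • Z) * t⁻¹ = e • (t * Z * t⁻¹) := by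
  rw [mul_smul_comm, smul_mul_assoc]

lemma smul_tmul_smul {V W : Type*} [AddCommGroup V] [Module ℂ V] [AddCommGroup W]
    [Module ℂ W] (x y : ℂ) (a : V) (b : W) :
    (x • a) ⊗ₜ[ℂ] (y • b) = (x * y) • (a ⊗ₜ[ℂ] b) := by
  rw [TensorProduct.tmul_smul, ← TensorProduct.smul_tmul', smul_smul, mul_comm]

lemma mul_reassoc {T : Type*} [Semigroup T] (a b c e : T) :
    a * (b * c * e) = a * b * c * e := by
  simp only [mul_assoc]

lemma key {p q r : ℕ}
    (u : Mat p ⊗[ℂ] Mat q) (y : Mat q ⊗[ℂ] Mat r) (w : Mat p ⊗[ℂ] Mat r)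
    (hu : u ≠ 0) (hy : y ≠ 0) (hw : w ≠ 0)
    (h : (TensorProduct.map LinearMap.id ((TensorProduct.mk ℂ (Mat q) (Mat r)).flip 1) u)
        * ((1 : Mat p) ⊗ₜ[ℂ] y)
      = TensorProduct.map LinearMap.id (TensorProduct.mk ℂ (Mat q) (Mat r) 1) w) :
    (∃ P Q, u = P ⊗ₜ[ℂ] Q ∧ P ≠ 0 ∧ IsUnit Q) ∧
      (∃ S T, y = S ⊗ₜ[ℂ] T ∧ IsUnit S ∧ T ≠ 0) := by
  obtain ⟨φ, ψ, hc⟩ := exists_slice_ne_zero hw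
  set m : Mat q := ls φ u with hm_def
  set n : Mat q := rs ψ y with hn_def
  have Eq2 : (m ⊗ₜ[ℂ] (1 : Mat r)) * y = (1 : Mat q) ⊗ₜ[ℂ] (ls φ w) := by
    have := congrArg (ls φ) h
    rwa [slice_ls_mul, slice_ls_incl] at this
  have Eq1 : u * ((1 : Mat p) ⊗ₜ[ℂ] n) = (rs ψ w) ⊗ₜ[ℂ] (1 : Mat q) := by
    have := congrArg (TensorProduct.map LinearMap.id (rs ψ)) h
    rwa [slice_rs_mul, slice_rs_incl] at this
  have Eq3 : m * n = (ψ (ls φ w)) • 1 := by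
    have := congrArg (rs ψ) Eq2
    rwa [rs_left_mul, rs_tmul] at this
  have hm : IsUnit m := isUnit_left_of_mul_eq_smul_one hc Eq3
  have hn : IsUnit n := isUnit_right_of_mul_eq_smul_one hc Eq3
  constructor
  · obtain ⟨v, hv⟩ := hn
    have hvinv : ((1 : Mat p) ⊗ₜ[ℂ] (v : Mat q)) * ((1 : Mat p) ⊗ₜ[ℂ] ((v⁻¹ : (Mat q)ˣ) : Mat q))
        = 1 := by
      rw [Algebra.TensorProduct.tmul_mul_tmul, one_mul, ← Units.val_mul, mul_inv_cancel]
      simp [Algebra.TensorProduct.one_def]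
    have : u = (rs ψ w) ⊗ₜ[ℂ] ((v⁻¹ : (Mat q)ˣ) : Mat q) := by
      calc u = u * (((1 : Mat p) ⊗ₜ[ℂ] (v : Mat q))
            * ((1 : Mat p) ⊗ₜ[ℂ] ((v⁻¹ : (Mat q)ˣ) : Mat q))) := by rw [hvinv, mul_one]
        _ = (u * ((1 : Mat p) ⊗ₜ[ℂ] n)) * ((1 : Mat p) ⊗ₜ[ℂ] ((v⁻¹ : (Mat q)ˣ) : Mat q)) := by
            rw [← mul_assoc, hv]
        _ = ((rs ψ w) ⊗ₜ[ℂ] (1 : Mat q)) * ((1 : Mat p) ⊗ₜ[ℂ] ((v⁻¹ : (Mat q)ˣ) : Mat q)) := by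
            rw [Eq1]
        _ = (rs ψ w) ⊗ₜ[ℂ] ((v⁻¹ : (Mat q)ˣ) : Mat q) := by
            rw [Algebra.TensorProduct.tmul_mul_tmul, one_mul, mul_one]
    refine ⟨rs ψ w, _, this, ?_, (v⁻¹).isUnit⟩
    intro h0
    rw [h0, TensorProduct.zero_tmul] at this
    exact hu this
  · obtain ⟨v, hv⟩ := hm
    have hvinv : (((v⁻¹ : (Mat q)ˣ) : Mat q) ⊗ₜ[ℂ] (1 : Mat r)) * ((v : Mat q) ⊗ₜ[ℂ] (1 : Mat r))
        = 1 := by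
      rw [Algebra.TensorProduct.tmul_mul_tmul, one_mul, ← Units.val_mul, inv_mul_cancel]
      simp [Algebra.TensorProduct.one_def]
    have : y = ((v⁻¹ : (Mat q)ˣ) : Mat q) ⊗ₜ[ℂ] (ls φ w) := by
      calc y = ((((v⁻¹ : (Mat q)ˣ) : Mat q) ⊗ₜ[ℂ] (1 : Mat r))
            * ((v : Mat q) ⊗ₜ[ℂ] (1 : Mat r))) * y := by rw [hvinv, one_mul]
        _ = (((v⁻¹ : (Mat q)ˣ) : Mat q) ⊗ₜ[ℂ] (1 : Mat r)) * ((m ⊗ₜ[ℂ] (1 : Mat r)) * y) := by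
            rw [mul_assoc, hv]
        _ = (((v⁻¹ : (Mat q)ˣ) : Mat q) ⊗ₜ[ℂ] (1 : Mat r)) * ((1 : Mat q) ⊗ₜ[ℂ] (ls φ w)) := by
            rw [Eq2]
        _ = ((v⁻¹ : (Mat q)ˣ) : Mat q) ⊗ₜ[ℂ] (ls φ w) := by
            rw [Algebra.TensorProduct.tmul_mul_tmul, one_mul, mul_one]
    refine ⟨_, ls φ w, this, (v⁻¹).isUnit, ?_⟩
    intro h0
    rw [h0, TensorProduct.tmul_zero] at this
    exact hy this

end Stmt12Aux


open Stmt12Aux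

/-- Let `M_i` be matrix algebras, `τ_j = σ_j^{1/2}` positive invertible.
Given nonzero `X_{i,j} ∈ M_i ⊗ M_j` satisfying the cocycle-type relation
`(X_{i,j} ⊗ 1)(1 ⊗ σ_j^{1/2} ⊗ 1)(1 ⊗ X_{j,k})(1 ⊗ σ_j^{-1/2} ⊗ 1) = (X_{i,k})₁₃`
for all `i,j,k`, there exists a family of invertible elements `α_i ∈ M_i` such that
`X_{i,j} = α_i ⊗ σ_j^{1/2} α_j⁻¹ σ_j^{-1/2}`. -/
theorem stmt12 {I : Type*} [Nonempty I] (d : I → ℕ)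
    (τ : ∀ i, Matrix (Fin (d i)) (Fin (d i)) ℂ)
    (hτ : ∀ i, (τ i).PosDef)
    (X : ∀ i j, Matrix (Fin (d i)) (Fin (d i)) ℂ ⊗[ℂ] Matrix (Fin (d j)) (Fin (d j)) ℂ)
    (hX : ∀ i j, X i j ≠ 0)
    (hrel : ∀ i j k,
      (TensorProduct.map (LinearMap.id)
          ((TensorProduct.mk ℂ (Matrix (Fin (d j)) (Fin (d j)) ℂ)
              (Matrix (Fin (d k)) (Fin (d k)) ℂ)).flip
            (1 : Matrix (Fin (d k)) (Fin (d k)) ℂ)) (X i j))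
        * ((1 : Matrix (Fin (d i)) (Fin (d i)) ℂ) ⊗ₜ[ℂ]
            ((τ j) ⊗ₜ[ℂ] (1 : Matrix (Fin (d k)) (Fin (d k)) ℂ)))
        * (TensorProduct.mk ℂ (Matrix (Fin (d i)) (Fin (d i)) ℂ)
            (Matrix (Fin (d j)) (Fin (d j)) ℂ ⊗[ℂ] Matrix (Fin (d k)) (Fin (d k)) ℂ)
            (1 : Matrix (Fin (d i)) (Fin (d i)) ℂ) (X j k))
        * ((1 : Matrix (Fin (d i)) (Fin (d i)) ℂ) ⊗ₜ[ℂ]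
            ((τ j)⁻¹ ⊗ₜ[ℂ] (1 : Matrix (Fin (d k)) (Fin (d k)) ℂ)))
      = TensorProduct.map LinearMap.id
          (TensorProduct.mk ℂ (Matrix (Fin (d j)) (Fin (d j)) ℂ)
            (Matrix (Fin (d k)) (Fin (d k)) ℂ)
            (1 : Matrix (Fin (d j)) (Fin (d j)) ℂ)) (X i k)) :
    ∃ α : ∀ i, Matrix (Fin (d i)) (Fin (d i)) ℂ,
      (∀ i, IsUnit (α i)) ∧
        ∀ i j, X i j = α i ⊗ₜ[ℂ] (τ j * (α j)⁻¹ * (τ j)⁻¹) := by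
  classical
  -- dimensions are positive
  have hd : ∀ i, 0 < d i := by
    intro i
    rcases Nat.eq_zero_or_pos (d i) with h0 | h
    · exfalso
      apply hX i i
      have h1 : (1 : Mat (d i)) = 0 := by
        ext a b
        have := a.isLt
        omega
      calc X i i = ((1 : Mat (d i)) ⊗ₜ[ℂ] (1 : Mat (d i))) * X i i := by
            rw [← Algebra.TensorProduct.one_def, one_mul]
        _ = 0 := by rw [h1, TensorProduct.zero_tmul, zero_mul]
    · exact h
  have hτu : ∀ j, IsUnit (τ j) := fun j => (hτ j).isUnit
  have hτd : ∀ j, IsUnit (τ j).det := fun j => (Matrix.isUnit_iff_isUnit_det _).mp (hτu j)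
  have hττ : ∀ j, τ j * (τ j)⁻¹ = 1 := fun j => Matrix.mul_nonsing_inv _ (hτd j)
  have hττ' : ∀ j, (τ j)⁻¹ * τ j = 1 := fun j => Matrix.nonsing_inv_mul _ (hτd j)
  have hτiu : ∀ j, IsUnit (τ j)⁻¹ := fun j => isUnit_inv_mat (hτu j)
  -- the conjugated element is nonzero
  have hYne : ∀ j k, (τ j ⊗ₜ[ℂ] (1 : Mat (d k))) * X j k * ((τ j)⁻¹ ⊗ₜ[ℂ] (1 : Mat (d k))) ≠ 0 := by
    intro j k h0
    apply hX j k
    have hX' : ((τ j)⁻¹ ⊗ₜ[ℂ] (1 : Mat (d k)))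
        * ((τ j ⊗ₜ[ℂ] (1 : Mat (d k))) * X j k * ((τ j)⁻¹ ⊗ₜ[ℂ] (1 : Mat (d k))))
        * (τ j ⊗ₜ[ℂ] (1 : Mat (d k))) = X j k := by
      have hba : ((τ j)⁻¹ ⊗ₜ[ℂ] (1 : Mat (d k))) * (τ j ⊗ₜ[ℂ] (1 : Mat (d k)))
          = (1 : Mat (d j) ⊗[ℂ] Mat (d k)) := by
        rw [Algebra.TensorProduct.tmul_mul_tmul, hττ' j, one_mul,
          ← Algebra.TensorProduct.one_def]
      calc ((τ j)⁻¹ ⊗ₜ[ℂ] (1 : Mat (d k)))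
            * ((τ j ⊗ₜ[ℂ] (1 : Mat (d k))) * X j k * ((τ j)⁻¹ ⊗ₜ[ℂ] (1 : Mat (d k))))
            * (τ j ⊗ₜ[ℂ] (1 : Mat (d k)))
          = (((τ j)⁻¹ ⊗ₜ[ℂ] (1 : Mat (d k))) * (τ j ⊗ₜ[ℂ] (1 : Mat (d k)))) * X j k
            * (((τ j)⁻¹ ⊗ₜ[ℂ] (1 : Mat (d k))) * (τ j ⊗ₜ[ℂ] (1 : Mat (d k)))) := by
            simp only [mul_assoc]
        _ = X j k := by rw [hba, one_mul, mul_one]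
    rw [h0, mul_zero, zero_mul] at hX'
    exact hX'.symm
  -- the relation, reorganized
  have HR : ∀ i j k,
      (TensorProduct.map LinearMap.id ((TensorProduct.mk ℂ (Mat (d j)) (Mat (d k))).flip 1)
          (X i j))
        * ((1 : Mat (d i)) ⊗ₜ[ℂ]
            ((τ j ⊗ₜ[ℂ] (1 : Mat (d k))) * X j k * ((τ j)⁻¹ ⊗ₜ[ℂ] (1 : Mat (d k)))))
      = TensorProduct.map LinearMap.id (TensorProduct.mk ℂ (Mat (d j)) (Mat (d k)) 1)
          (X i k) := by
    intro i j k
    have h := hrel i j k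
    rw [TensorProduct.mk_apply] at h
    calc (TensorProduct.map LinearMap.id ((TensorProduct.mk ℂ (Mat (d j)) (Mat (d k))).flip 1)
          (X i j))
        * ((1 : Mat (d i)) ⊗ₜ[ℂ]
            ((τ j ⊗ₜ[ℂ] (1 : Mat (d k))) * X j k * ((τ j)⁻¹ ⊗ₜ[ℂ] (1 : Mat (d k)))))
        = (TensorProduct.map LinearMap.id
              ((TensorProduct.mk ℂ (Mat (d j)) (Mat (d k))).flip 1) (X i j))
          * (((1 : Mat (d i)) ⊗ₜ[ℂ] (τ j ⊗ₜ[ℂ] (1 : Mat (d k))))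
            * ((1 : Mat (d i)) ⊗ₜ[ℂ] X j k)
            * ((1 : Mat (d i)) ⊗ₜ[ℂ] ((τ j)⁻¹ ⊗ₜ[ℂ] (1 : Mat (d k))))) := by
          rw [one_tmul_mul_one_tmul, one_tmul_mul_one_tmul]
      _ = (TensorProduct.map LinearMap.id
              ((TensorProduct.mk ℂ (Mat (d j)) (Mat (d k))).flip 1) (X i j))
          * ((1 : Mat (d i)) ⊗ₜ[ℂ] (τ j ⊗ₜ[ℂ] (1 : Mat (d k))))
          * ((1 : Mat (d i)) ⊗ₜ[ℂ] X j k)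
          * ((1 : Mat (d i)) ⊗ₜ[ℂ] ((τ j)⁻¹ ⊗ₜ[ℂ] (1 : Mat (d k)))) :=
            mul_reassoc (T := Mat (d i) ⊗[ℂ] (Mat (d j) ⊗[ℂ] Mat (d k))) _ _ _ _
      _ = TensorProduct.map LinearMap.id (TensorProduct.mk ℂ (Mat (d j)) (Mat (d k)) 1)
          (X i k) := h
  -- each X i j is an elementary tensor with invertible legs
  have main : ∀ i j, ∃ P Q, X i j = P ⊗ₜ[ℂ] Q ∧ IsUnit P ∧ IsUnit Q := by
    intro i j
    obtain ⟨⟨P, Q, hXij, hP0, hQ⟩, -⟩ :=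
      key (X i j) _ (X i j) (hX i j) (hYne j j) (hX i j) (HR i j j)
    obtain ⟨-, ⟨S, T, hYij, hS, hT0⟩⟩ :=
      key (X i i) _ (X i j) (hX i i) (hYne i j) (hX i j) (HR i i j)
    have hYPQ : (τ i ⊗ₜ[ℂ] (1 : Mat (d j))) * X i j * ((τ i)⁻¹ ⊗ₜ[ℂ] (1 : Mat (d j)))
        = (τ i * P * (τ i)⁻¹) ⊗ₜ[ℂ] Q := by
      rw [hXij, Algebra.TensorProduct.tmul_mul_tmul, Algebra.TensorProduct.tmul_mul_tmul,
        one_mul, mul_one]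
    rw [hYPQ] at hYij
    obtain ⟨sc, hsc, hc1, hc2⟩ :=
      tmul_eq_tmul_iff (unit_ne_zero (hd i) hS) hT0 hYij.symm
    have hPu : IsUnit P := by
      have h1 : IsUnit (τ i * P * (τ i)⁻¹) := by
        rw [hc1]; exact isUnit_smul_mat hsc hS
      have h2 : P = (τ i)⁻¹ * (τ i * P * (τ i)⁻¹) * τ i := by
        calc P = ((τ i)⁻¹ * τ i) * P * ((τ i)⁻¹ * τ i) := by
              rw [hττ' i, one_mul, mul_one]
          _ = (τ i)⁻¹ * (τ i * P * (τ i)⁻¹) * τ i := by simp only [mul_assoc]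
      rw [h2]
      exact ((hτiu i).mul h1).mul (hτu i)
    exact ⟨P, Q, hXij, hPu, hQ⟩
  choose P Q hXPQ hPu hQu using main
  have hPd : ∀ i j, IsUnit (P i j).det :=
    fun i j => (Matrix.isUnit_iff_isUnit_det _).mp (hPu i j)
  -- elementary form of the relation
  have star : ∀ i j k,
      P i j ⊗ₜ[ℂ] ((Q i j * (τ j * P j k * (τ j)⁻¹)) ⊗ₜ[ℂ] Q j k)
        = P i k ⊗ₜ[ℂ] ((1 : Mat (d j)) ⊗ₜ[ℂ] Q i k) := by
    intro i j k
    have h := HR i j k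
    rw [hXPQ i j, hXPQ j k, hXPQ i k] at h
    rw [TensorProduct.map_tmul, TensorProduct.map_tmul, LinearMap.flip_apply,
      TensorProduct.mk_apply, TensorProduct.mk_apply, LinearMap.id_apply, LinearMap.id_apply,
      Algebra.TensorProduct.tmul_mul_tmul, Algebra.TensorProduct.tmul_mul_tmul, one_mul, mul_one,
      Algebra.TensorProduct.tmul_mul_tmul, Algebra.TensorProduct.tmul_mul_tmul, one_mul, mul_one] at h
    exact h
  -- scalar relations from the elementary relation
  have G : ∀ i j k, ∃ s u : ℂ, s ≠ 0 ∧ u ≠ 0 ∧ P i k = s • P i j ∧ Q j k = u • Q i k ∧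
      Q i j * (τ j * P j k * (τ j)⁻¹) = (u⁻¹ * s) • 1 := by
    intro i j k
    have hMu : IsUnit (Q i j * (τ j * P j k * (τ j)⁻¹)) :=
      (hQu i j).mul (((hτu j).mul (hPu j k)).mul (hτiu j))
    have hM0 : Q i j * (τ j * P j k * (τ j)⁻¹) ≠ 0 := unit_ne_zero (hd j) hMu
    have hb : (Q i j * (τ j * P j k * (τ j)⁻¹)) ⊗ₜ[ℂ] Q j k ≠ 0 :=
      tmul_ne_zero' hM0 (unit_ne_zero (hd k) (hQu j k))
    obtain ⟨s, hs, h1, h2⟩ :=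
      tmul_eq_tmul_iff (unit_ne_zero (hd i) (hPu i j)) hb (star i j k)
    rw [TensorProduct.smul_tmul'] at h2
    obtain ⟨u, hu, h3, h4⟩ :=
      tmul_eq_tmul_iff hM0 (unit_ne_zero (hd k) (hQu j k)) h2
    refine ⟨s, u, hs, hu, h1, h4, ?_⟩
    have h5 := congrArg (fun z => u⁻¹ • z) h3
    simp only [smul_smul, inv_mul_cancel₀ hu, one_smul] at h5
    exact h5.symm
  choose s u hs hu hPrel hQrel hMrel using G
  -- Q i j is a multiple of τ j * (P j j)⁻¹ * (τ j)⁻¹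
  have hQform' : ∀ i j, ∃ cc : ℂ, cc ≠ 0 ∧ Q i j = cc • (τ j * (P j j)⁻¹ * (τ j)⁻¹) := by
    intro i j
    refine ⟨(u i j j)⁻¹ * s i j j,
      mul_ne_zero (inv_ne_zero (hu i j j)) (hs i j j), ?_⟩
    have h := hMrel i j j
    have hinv : (τ j * P j j * (τ j)⁻¹) * (τ j * (P j j)⁻¹ * (τ j)⁻¹) = 1 :=
      conj_mul_conj (hτd j) (Matrix.mul_nonsing_inv _ (hPd j j))
    have h2 := congrArg (fun z => z * (τ j * (P j j)⁻¹ * (τ j)⁻¹)) h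
    rw [mul_assoc, hinv, mul_one, smul_mul_assoc, one_mul] at h2
    exact h2
  choose c hc0 hQform using hQform'
  -- P j k is a multiple of P j j
  have hPform' : ∀ j k, ∃ ee : ℂ, ee ≠ 0 ∧ P j k = ee • P j j := by
    intro j k
    refine ⟨(c j j)⁻¹ * ((u j j k)⁻¹ * s j j k),
      mul_ne_zero (inv_ne_zero (hc0 j j))
        (mul_ne_zero (inv_ne_zero (hu j j k)) (hs j j k)), ?_⟩
    have h1 := hMrel j j k
    rw [hQform j j, smul_mul_assoc] at h1
    have h3 := congrArg (fun z => (c j j)⁻¹ • z) h1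
    simp only [smul_smul, inv_mul_cancel₀ (hc0 j j), one_smul] at h3
    have h4 := congrArg (fun z => (τ j * P j j * (τ j)⁻¹) * z) h3
    rw [← mul_assoc, conj_mul_conj (hτd j) (Matrix.mul_nonsing_inv _ (hPd j j)),
      one_mul, mul_smul_comm, mul_one] at h4
    rw [show ((c j j)⁻¹ * ((u j j k)⁻¹ * s j j k)) • (τ j * P j j * (τ j)⁻¹)
        = τ j * (((c j j)⁻¹ * ((u j j k)⁻¹ * s j j k)) • P j j) * (τ j)⁻¹ from
      (conj_smul _ _ _).symm] at h4
    exact (IsUnit.mul_right_inj (hτu j)).mp ((IsUnit.mul_left_inj (hτiu j)).mp h4)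
  choose e he0 hPform using hPform'
  -- scalar relations
  have hA : ∀ i j k, e i k = s i j k * e i j := by
    intro i j k
    have h := hPrel i j k
    rw [hPform i k, hPform i j, smul_smul] at h
    exact smul_cancel (unit_ne_zero (hd i) (hPu i i)) h
  have hRu : ∀ k, IsUnit (τ k * (P k k)⁻¹ * (τ k)⁻¹) :=
    fun k => ((hτu k).mul (isUnit_inv_mat (hPu k k))).mul (hτiu k)
  have hB : ∀ i j k, c j k = u i j k * c i k := by
    intro i j k
    have h := hQrel i j k
    rw [hQform j k, hQform i k, smul_smul] at h
    exact smul_cancel (unit_ne_zero (hd k) (hRu k)) h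
  have hC : ∀ i j k, c i j * e j k = (u i j k)⁻¹ * s i j k := by
    intro i j k
    have h := hMrel i j k
    rw [hQform i j, hPform j k, conj_smul, smul_mul_assoc, mul_smul_comm, smul_smul,
      conj_mul_conj (hτd j) (Matrix.nonsing_inv_mul _ (hPd j j))] at h
    exact smul_cancel (mat_one_ne_zero (hd j)) h
  have hf0 : ∀ i j, e i j * c i j ≠ 0 := fun i j => mul_ne_zero (he0 i j) (hc0 i j)
  -- cocycle identity for the scalars
  have hcoc : ∀ i j k, (e i j * c i j) * (e j k * c j k) = e i k * c i k := by
    intro i j k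
    have h1 := hA i j k
    have h2 := hB i j k
    have h3 := hC i j k
    calc (e i j * c i j) * (e j k * c j k)
        = e i j * (c i j * e j k) * c j k := by ring
      _ = e i j * ((u i j k)⁻¹ * s i j k) * (u i j k * c i k) := by rw [h3, h2]
      _ = s i j k * e i j * c i k := by
          field_simp [hu i j k]
      _ = e i k * c i k := by rw [← h1]
  obtain ⟨i0⟩ := (inferInstance : Nonempty I)
  refine ⟨fun i => (e i i0 * c i i0) • P i i,
    fun i => isUnit_smul_mat (hf0 i i0) (hPu i i), ?_⟩
  intro i j
  have hαinv : ((e j i0 * c j i0) • P j j)⁻¹ = (e j i0 * c j i0)⁻¹ • (P j j)⁻¹ := by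
    apply Matrix.inv_eq_right_inv
    rw [smul_mul_assoc, mul_smul_comm, smul_smul, mul_inv_cancel₀ (hf0 j i0),
      Matrix.mul_nonsing_inv _ (hPd j j), one_smul]
  rw [hXPQ i j, hPform i j, hQform i j, hαinv, conj_smul, smul_tmul_smul, smul_tmul_smul]
  have hsc : e i j * c i j = (e i i0 * c i i0) * (e j i0 * c j i0)⁻¹ := by
    field_simp [he0 j i0, hc0 j i0]
    linear_combination hcoc i j i0
  rw [hsc]
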